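/- Let X be an additive commutative monoid, Y an additive commutative group with a partial order compatible with addition, and p a prime. Suppose f : X → Y satisfies the convexity inequality for all decompositions whose total weight is a power of p; that is, for every l ≥ 1, every n ≥ 1, all positive integers m₁,…,mₙ with m₁+⋯+mₙ = p^l, and all x, x₁,…,xₙ ∈ X with p^l • x = m₁ • x₁ + ⋯ + mₙ • xₙ, one has p^l • f(x) ≤ m₁ • f(x₁) + ⋯ + mₙ • f(xₙ). Then f is convex, i.e., the inequality holds for all decompositions with arbitrary total weight. -/

import Mathlib

/-- A function between additive commutative monoids, whose codomain carries a partial order,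
is convex. -/
def ConvexFn {X Y : Type*} [AddCommMonoid X] [AddCommMonoid Y] [PartialOrder Y]
    (f : X → Y) : Prop :=
  ∀ (n : ℕ), 0 < n → ∀ m : Fin n → ℕ, (∀ i, 0 < m i) →
    ∀ (xs : Fin n → X) (x : X), (∑ i, m i) • x = ∑ i, m i • xs i →
      (∑ i, m i) • f x ≤ ∑ i, m i • f (xs i)

/-- If the convexity inequality holds for all decompositions whose total weight is a power of a
prime `p`, then it holds for all decompositions, i.e. `f` is convex. -/
theorem convexFn_of_prime_powers {X Y : Type*} [AddCommMonoid X] [AddCommGroup Y]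
    [PartialOrder Y] [CovariantClass Y Y (· + ·) (· ≤ ·)]
    (p : ℕ) (hp : p.Prime) (f : X → Y)
    (hf : ∀ (l : ℕ), 0 < l → ∀ (n : ℕ), 0 < n → ∀ m : Fin n → ℕ, (∀ i, 0 < m i) →
      (∑ i, m i) = p ^ l → ∀ (xs : Fin n → X) (x : X),
        (p ^ l) • x = ∑ i, m i • xs i → (p ^ l) • f x ≤ ∑ i, m i • f (xs i)) :
    ConvexFn f := by
  intro n hn m hm xs x hx
  have hne : Nonempty (Fin n) := ⟨⟨0, hn⟩⟩
  set N := ∑ i, m i with hN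
  have hNpos : 0 < N := Finset.sum_pos (fun i _ => hm i) Finset.univ_nonempty
  have hlt : N < p ^ N := Nat.lt_pow_self (n := N) hp.one_lt
  set m' : Fin (n + 1) → ℕ := Fin.snoc m (p ^ N - N) with hm'
  set xs' : Fin (n + 1) → X := Fin.snoc xs x with hxs'
  have hsum : (∑ i, m' i) = p ^ N := by
    rw [Fin.sum_univ_castSucc]
    simp only [hm', Fin.snoc_castSucc, Fin.snoc_last, ← hN]
    omega
  have hx' : (p ^ N) • x = ∑ i, m' i • xs' i := by
    rw [Fin.sum_univ_castSucc]
    simp only [hm', hxs', Fin.snoc_castSucc, Fin.snoc_last]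
    rw [← hx, ← add_nsmul, Nat.add_sub_cancel' hlt.le]
  have hmpos : ∀ i, 0 < m' i := by
    intro i
    refine Fin.lastCases ?_ ?_ i
    · simp only [hm', Fin.snoc_last]; omega
    · intro j; simpa only [hm', Fin.snoc_castSucc] using hm j
  have key := hf N hNpos (n + 1) (Nat.succ_pos n) m' hmpos hsum xs' x hx'
  rw [Fin.sum_univ_castSucc] at key
  simp only [hm', hxs', Fin.snoc_castSucc, Fin.snoc_last] at key
  have hdecomp : (p ^ N) • f x = N • f x + (p ^ N - N) • f x := by
    rw [← add_nsmul, Nat.add_sub_cancel' hlt.le]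
  rw [hdecomp] at key
  exact le_of_add_le_add_right key
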